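/- Let G be a finite simple graph and let S be a vertex-disjoint path cover of G of minimum size μ(G) which, among all minimum-size vertex-disjoint path covers, maximizes the sum over P ∈ S of |P|², where |P| is the number of vertices of P. Let P, Q ∈ S be distinct paths with |P| ≤ |Q|. Then no endvertex of Q is adjacent in G to any vertex of P. -/

import Mathlib

open SimpleGraph

def IsVDPCover {V : Type} (G : SimpleGraph V)
    (S : Finset (Σ u v : V, G.Walk u v)) : Prop :=
  (∀ P ∈ S, P.2.2.IsPath) ∧ (∀ x : V, ∃! P, P ∈ S ∧ x ∈ P.2.2.support)

lemma cover_disj {V : Type} {G : SimpleGraph V} {S : Finset (Σ u v : V, G.Walk u v)}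
    (hS : IsVDPCover G S) {A B : Σ u v : V, G.Walk u v} (hA : A ∈ S) (hB : B ∈ S)
    (hAB : A ≠ B) {z : V} (hzA : z ∈ A.2.2.support) : z ∉ B.2.2.support := by
  intro hzB
  exact hAB ((hS.2 z).unique ⟨hA, hzA⟩ ⟨hB, hzB⟩)

lemma cover_replace {V : Type} {G : SimpleGraph V} [DecidableEq (Σ u v : V, G.Walk u v)]
    {S : Finset (Σ u v : V, G.Walk u v)}
    (hS : IsVDPCover G S) {A B : Σ u v : V, G.Walk u v} (hA : A ∈ S) (hB : B ∈ S)
    (hAB : A ≠ B) (N : Finset (Σ u v : V, G.Walk u v))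
    (hNpath : ∀ R ∈ N, R.2.2.IsPath)
    (hNuniq : ∀ z : V, (z ∈ A.2.2.support ∨ z ∈ B.2.2.support) →
      ∃! R, R ∈ N ∧ z ∈ R.2.2.support)
    (hNsub : ∀ R ∈ N, ∀ z ∈ R.2.2.support, z ∈ A.2.2.support ∨ z ∈ B.2.2.support) :
    IsVDPCover G ((S.erase A).erase B ∪ N) := by
  constructor
  · intro R hR
    rcases Finset.mem_union.mp hR with h | h
    · exact hS.1 R (Finset.mem_of_mem_erase (Finset.mem_of_mem_erase h))
    · exact hNpath R h
  · intro z
    obtain ⟨C, ⟨hCS, hzC⟩, hCuniq⟩ := hS.2 z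
    by_cases hCA : C = A ∨ C = B
    · have hzAB : z ∈ A.2.2.support ∨ z ∈ B.2.2.support := by
        rcases hCA with h | h <;> subst h <;> [left; right] <;> exact hzC
      obtain ⟨R, ⟨hRN, hzR⟩, hRuniq⟩ := hNuniq z hzAB
      refine ⟨R, ⟨Finset.mem_union_right _ hRN, hzR⟩, ?_⟩
      rintro R' ⟨hR', hzR'⟩
      rcases Finset.mem_union.mp hR' with h | h
      · exfalso
        have hR'S : R' ∈ S := Finset.mem_of_mem_erase (Finset.mem_of_mem_erase h)
        have : R' = C := hCuniq R' ⟨hR'S, hzR'⟩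
        subst this
        rcases hCA with h' | h' <;> subst h'
        · exact (Finset.mem_erase.mp (Finset.mem_of_mem_erase h)).1 rfl
        · exact (Finset.mem_erase.mp h).1 rfl
      · exact hRuniq R' ⟨h, hzR'⟩
    · push_neg at hCA
      have hCE : C ∈ (S.erase A).erase B :=
        Finset.mem_erase.mpr ⟨hCA.2, Finset.mem_erase.mpr ⟨hCA.1, hCS⟩⟩
      refine ⟨C, ⟨Finset.mem_union_left _ hCE, hzC⟩, ?_⟩
      rintro R' ⟨hR', hzR'⟩
      rcases Finset.mem_union.mp hR' with h | h
      · exact hCuniq R' ⟨Finset.mem_of_mem_erase (Finset.mem_of_mem_erase h), hzR'⟩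
      · exfalso
        rcases hNsub R' h z hzR' with h' | h'
        · exact hCA.1 (hCuniq A ⟨hA, h'⟩ ▸ rfl) |>.elim
        · exact hCA.2 (hCuniq B ⟨hB, h'⟩ ▸ rfl) |>.elim

theorem stmt_5 {V : Type} [Fintype V] (G : SimpleGraph V)
    (S : Finset (Σ u v : V, G.Walk u v))
    (hS : IsVDPCover G S)
    (hmin : ∀ S' : Finset (Σ u v : V, G.Walk u v), IsVDPCover G S' → S.card ≤ S'.card)
    (hmax : ∀ S' : Finset (Σ u v : V, G.Walk u v), IsVDPCover G S' → S'.card = S.card →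
      (∑ P ∈ S', P.2.2.support.length ^ 2) ≤ ∑ P ∈ S, P.2.2.support.length ^ 2)
    (P Q : Σ u v : V, G.Walk u v) (hP : P ∈ S) (hQ : Q ∈ S) (hPQ : P ≠ Q)
    (hlen : P.2.2.support.length ≤ Q.2.2.support.length)
    (e : V) (he : e = Q.1 ∨ e = Q.2.1)
    (x : V) (hx : x ∈ P.2.2.support) :
    ¬ G.Adj e x := by
  classical
  intro hadj
  have hQP : ∀ z ∈ Q.2.2.support, z ∉ P.2.2.support :=
    fun z hz => cover_disj hS hQ hP hPQ.symm hz
  have hPQd : ∀ z ∈ P.2.2.support, z ∉ Q.2.2.support :=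
    fun z hz => cover_disj hS hP hQ hPQ hz
  have heQ : e ∈ Q.2.2.support := by
    rcases he with h | h <;> subst h
    · exact Walk.start_mem_support _
    · exact Walk.end_mem_support _
  -- orient Q to end at e
  obtain ⟨qo, Qw, hQwPath, hQwperm⟩ :
      ∃ (qo : V) (Qw : G.Walk qo e), Qw.IsPath ∧ Qw.support.Perm Q.2.2.support := by
    rcases he with h | h
    · subst h
      exact ⟨Q.2.1, Q.2.2.reverse, (hS.1 Q hQ).reverse, by
        rw [Walk.support_reverse]; exact Q.2.2.support.reverse_perm⟩
    · subst h
      exact ⟨Q.1, Q.2.2, hS.1 Q hQ, List.Perm.refl _⟩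
  have hQwmem : ∀ z, z ∈ Qw.support ↔ z ∈ Q.2.2.support := fun z => hQwperm.mem_iff
  have hErase : ((S.erase P).erase Q).card = S.card - 2 := by
    rw [Finset.card_erase_of_mem (Finset.mem_erase.mpr ⟨hPQ.symm, hQ⟩),
      Finset.card_erase_of_mem hP]
    omega
  have hS2 : 2 ≤ S.card := Finset.one_lt_card.mpr ⟨P, hP, Q, hQ, hPQ⟩
  by_cases hend : x = P.1 ∨ x = P.2.1
  -- Case A: x is an endvertex of P; merge P and Q, contradicting minimality.
  · obtain ⟨po, Pw, hPwPath, hPwperm⟩ :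
        ∃ (po : V) (Pw : G.Walk x po), Pw.IsPath ∧ Pw.support.Perm P.2.2.support := by
      rcases hend with h | h
      · subst h
        exact ⟨P.2.1, P.2.2, hS.1 P hP, List.Perm.refl _⟩
      · subst h
        exact ⟨P.1, P.2.2.reverse, (hS.1 P hP).reverse, by
          rw [Walk.support_reverse]; exact P.2.2.support.reverse_perm⟩
    have hPwmem : ∀ z, z ∈ Pw.support ↔ z ∈ P.2.2.support := fun z => hPwperm.mem_iff
    set M : G.Walk qo po := Qw.append (Walk.cons hadj Pw) with hM
    have hMsupp : M.support = Qw.support ++ Pw.support := by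
      rw [hM, Walk.support_append, Walk.support_cons, List.tail_cons]
    have hMPath : M.IsPath := by
      rw [Walk.isPath_def, hMsupp, List.nodup_append]
      refine ⟨hQwPath.support_nodup, hPwPath.support_nodup, ?_⟩
      intro z hz z' hz' hzz
      exact hQP z ((hQwmem z).mp hz) ((hPwmem z).mp (hzz ▸ hz'))
    set Mt : Σ u v : V, G.Walk u v := ⟨qo, po, M⟩ with hMt
    have hcov : IsVDPCover G ((S.erase P).erase Q ∪ {Mt}) := by
      refine cover_replace hS hP hQ hPQ {Mt} ?_ ?_ ?_
      · intro R hR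
        rw [Finset.mem_singleton] at hR
        subst hR; exact hMPath
      · intro z hz
        refine ⟨Mt, ⟨Finset.mem_singleton_self _, ?_⟩, ?_⟩
        · show z ∈ M.support
          rw [hMsupp, List.mem_append]
          rcases hz with h | h
          · exact Or.inr ((hPwmem z).mpr h)
          · exact Or.inl ((hQwmem z).mpr h)
        · rintro R' ⟨hR', _⟩
          exact Finset.mem_singleton.mp hR'
      · intro R hR z hz
        rw [Finset.mem_singleton] at hR
        subst hR
        have : z ∈ M.support := hz
        rw [hMsupp, List.mem_append] at this
        rcases this with h | h
        · exact Or.inr ((hQwmem z).mp h)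
        · exact Or.inl ((hPwmem z).mp h)
    have := hmin _ hcov
    have hle : ((S.erase P).erase Q ∪ {Mt}).card ≤ S.card - 2 + 1 := by
      calc ((S.erase P).erase Q ∪ {Mt}).card ≤ ((S.erase P).erase Q).card + 1 :=
            le_trans (Finset.card_union_le _ _) (by simp)
        _ = S.card - 2 + 1 := by rw [hErase]
    omega
  -- Case B: x is an interior vertex of P; split P and attach to Q.
  · push_neg at hend
    have hPpath : P.2.2.IsPath := hS.1 P hP
    set T : G.Walk P.1 x := P.2.2.takeUntil x hx with hT
    set D : G.Walk x P.2.1 := P.2.2.dropUntil x hx with hD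
    have hTPath : T.IsPath := hPpath.takeUntil hx
    have hDPath : D.IsPath := hPpath.dropUntil hx
    have hTrevnil : ¬ T.reverse.Nil := Walk.not_nil_of_ne hend.1
    obtain ⟨y, hyx, W, hW⟩ := Walk.not_nil_iff.mp hTrevnil
    have hWPath : W.IsPath := by
      have := hTPath.reverse
      rw [hW] at this
      exact this.of_cons
    have hTrevsupp : T.support.reverse = x :: W.support := by
      rw [← Walk.support_reverse, hW, Walk.support_cons]
    have hPsupp : P.2.2.support = T.support ++ D.support.tail := by
      conv_lhs => rw [← Walk.take_spec P.2.2 hx]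
      rw [Walk.support_append]
    have hDsupp : D.support = x :: D.support.tail := Walk.support_eq_cons D
    have hPperm : P.2.2.support.Perm (W.support ++ D.support) := by
      rw [hPsupp]
      have h1 : T.support.Perm (x :: W.support) := hTrevsupp ▸ T.support.reverse_perm.symm
      refine (h1.append_right _).trans ?_
      conv_rhs => rw [hDsupp]
      exact List.perm_middle.symm
    have hPmem : ∀ z, z ∈ P.2.2.support ↔ (z ∈ W.support ∨ z ∈ D.support) := by
      intro z; rw [hPperm.mem_iff, List.mem_append]
    have hWDnd : (W.support ++ D.support).Nodup := hPperm.nodup_iff.mp hPpath.support_nodup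
    rw [List.nodup_append] at hWDnd
    -- the long path R
    set R : G.Walk qo P.2.1 := Qw.append (Walk.cons hadj D) with hR
    have hRsupp : R.support = Qw.support ++ D.support := by
      rw [hR, Walk.support_append, Walk.support_cons, List.tail_cons]
    have hRPath : R.IsPath := by
      rw [Walk.isPath_def, hRsupp, List.nodup_append]
      refine ⟨hQwPath.support_nodup, hWDnd.2.1, ?_⟩
      intro z hz z' hz' hzz
      exact hQP z ((hQwmem z).mp hz) ((hPmem z).mpr (Or.inr (hzz ▸ hz')))
    set Rt : Σ u v : V, G.Walk u v := ⟨qo, P.2.1, R⟩ with hRt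
    set Wt : Σ u v : V, G.Walk u v := ⟨y, P.1, W⟩ with hWt
    have hRtsupp : Rt.2.2.support = Qw.support ++ D.support := hRsupp
    have hWtsupp : Wt.2.2.support = W.support := rfl
    have heR : e ∈ R.support := by
      rw [hRsupp, List.mem_append]; exact Or.inl (Walk.end_mem_support _)
    have heW : e ∉ W.support := fun h =>
      hQP e heQ ((hPmem e).mpr (Or.inl h))
    have hRtWt : Rt ≠ Wt := by
      intro h
      have := congrArg (fun A : (Σ u v : V, G.Walk u v) => A.2.2.support) h
      simp only [hRtsupp, hWtsupp] at this
      rw [← hRsupp] at this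
      exact heW (this ▸ heR)
    -- the new cover
    have hcov : IsVDPCover G ((S.erase P).erase Q ∪ {Rt, Wt}) := by
      refine cover_replace hS hP hQ hPQ {Rt, Wt} ?_ ?_ ?_
      · intro A hA
        rcases Finset.mem_insert.mp hA with h | h
        · subst h; exact hRPath
        · rw [Finset.mem_singleton] at h; subst h; exact hWPath
      · intro z hz
        by_cases hzW : z ∈ W.support
        · refine ⟨Wt, ⟨Finset.mem_insert.mpr (Or.inr (Finset.mem_singleton_self _)), hzW⟩, ?_⟩
          rintro A ⟨hA, hzA⟩
          rcases Finset.mem_insert.mp hA with h | h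
          · exfalso
            subst h
            rw [hRtsupp, List.mem_append] at hzA
            rcases hzA with h' | h'
            · exact hQP z ((hQwmem z).mp h') ((hPmem z).mpr (Or.inl hzW)) 
            · exact hWDnd.2.2 z hzW z h' rfl
          · exact Finset.mem_singleton.mp h
        · have hzR : z ∈ Rt.2.2.support := by
            rw [hRtsupp, List.mem_append]
            rcases hz with h | h
            · rcases (hPmem z).mp h with h' | h'
              · exact absurd h' hzW
              · exact Or.inr h'
            · exact Or.inl ((hQwmem z).mpr h)
          refine ⟨Rt, ⟨Finset.mem_insert_self _ _, hzR⟩, ?_⟩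
          rintro A ⟨hA, hzA⟩
          rcases Finset.mem_insert.mp hA with h | h
          · exact h
          · exfalso
            rw [Finset.mem_singleton] at h
            subst h
            exact hzW hzA
      · intro A hA z hz
        rcases Finset.mem_insert.mp hA with h | h
        · subst h
          rw [hRtsupp, List.mem_append] at hz
          rcases hz with h' | h'
          · exact Or.inr ((hQwmem z).mp h')
          · exact Or.inl ((hPmem z).mpr (Or.inr h'))
        · rw [Finset.mem_singleton] at h
          subst h
          exact Or.inl ((hPmem z).mpr (Or.inl hz))
    -- Rt, Wt are not in the erased set
    have hRtE : Rt ∉ (S.erase P).erase Q := by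
      intro h
      have hRS : Rt ∈ S := Finset.mem_of_mem_erase (Finset.mem_of_mem_erase h)
      have hRneQ : Rt ≠ Q := (Finset.mem_erase.mp h).1
      exact cover_disj hS hQ hRS (Ne.symm hRneQ) heQ heR
    have hyP : y ∈ P.2.2.support := (hPmem y).mpr (Or.inl (Walk.start_mem_support _))
    have hWtE : Wt ∉ (S.erase P).erase Q := by
      intro h
      have hWS : Wt ∈ S := Finset.mem_of_mem_erase (Finset.mem_of_mem_erase h)
      have hWneP : Wt ≠ P := (Finset.mem_erase.mp (Finset.mem_of_mem_erase h)).1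
      exact cover_disj hS hP hWS (Ne.symm hWneP) hyP (Walk.start_mem_support _)
    have hdisj : Disjoint ((S.erase P).erase Q) ({Rt, Wt} : Finset _) := by
      rw [Finset.disjoint_right]
      intro A hA
      rcases Finset.mem_insert.mp hA with h | h
      · subst h; exact hRtE
      · rw [Finset.mem_singleton] at h; subst h; exact hWtE
    have hcard2 : ({Rt, Wt} : Finset (Σ u v : V, G.Walk u v)).card = 2 := by
      rw [Finset.card_insert_of_notMem (by simpa using hRtWt), Finset.card_singleton]
    have hcard : ((S.erase P).erase Q ∪ {Rt, Wt}).card = S.card := by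
      rw [Finset.card_union_of_disjoint hdisj, hErase, hcard2]
      omega
    -- sums
    have hsum := hmax _ hcov hcard
    rw [Finset.sum_union hdisj] at hsum
    have hsumN : (∑ A ∈ ({Rt, Wt} : Finset (Σ u v : V, G.Walk u v)),
        A.2.2.support.length ^ 2)
        = (Qw.support.length + D.support.length) ^ 2 + W.support.length ^ 2 := by
      rw [Finset.sum_insert (by simpa using hRtWt), Finset.sum_singleton,
        hRtsupp, hWtsupp, List.length_append]
    have hsumS : (∑ A ∈ S, A.2.2.support.length ^ 2)
        = (∑ A ∈ (S.erase P).erase Q, A.2.2.support.length ^ 2)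
          + Q.2.2.support.length ^ 2 + P.2.2.support.length ^ 2 := by
      rw [← Finset.add_sum_erase S _ hP, ← Finset.add_sum_erase (S.erase P) _
        (Finset.mem_erase.mpr ⟨hPQ.symm, hQ⟩)]
      ring
    rw [hsumN, hsumS] at hsum
    have hQlen : Q.2.2.support.length = Qw.support.length := (hQwperm.length_eq).symm
    have hPlen : P.2.2.support.length = W.support.length + D.support.length := by
      rw [hPperm.length_eq, List.length_append]
    rw [hQlen, hPlen] at hsum hlen
    have hd1 : 1 ≤ D.support.length := by
      cases h : D.support with
      | nil => exact absurd h (Walk.support_ne_nil D)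
      | cons a l => simp
    nlinarith [hsum, hlen, hd1]
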